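/- Let q = 2^h with h ≥ 1, let i satisfy gcd(i, h) = 1, and let t1, t2, t3 be pairwise distinct elements of F_q. Then the three points (1, t1, t1^(2^i)), (1, t2, t2^(2^i)), (1, t3, t3^(2^i)) of the projective plane PG(2, q) are not collinear. -/

import Mathlib

/-- For `q = 2^h`, `gcd(i,h) = 1` and pairwise distinct `t1, t2, t3 ∈ F_q`, the three
points `(1, t_j, t_j^(2^i))` of `PG(2,q)` are not collinear, i.e. the three coordinate
vectors are linearly independent. -/
theorem three_points_not_collinear (h i : ℕ) (hh : 1 ≤ h) (hgcd : Nat.gcd i h = 1)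
    (F : Type) [Field F] [Fintype F] (hF : Fintype.card F = 2 ^ h)
    (t1 t2 t3 : F) (h12 : t1 ≠ t2) (h13 : t1 ≠ t3) (h23 : t2 ≠ t3) :
    LinearIndependent F
      ![(![1, t1, t1 ^ 2 ^ i] : Fin 3 → F),
        (![1, t2, t2 ^ 2 ^ i] : Fin 3 → F),
        (![1, t3, t3 ^ 2 ^ i] : Fin 3 → F)] := by
  have hcard3 : 2 < Fintype.card F := Fintype.two_lt_card_iff.mpr ⟨t1, t2, t3, h12, h13, h23⟩
  have hh2 : 2 ≤ h := by
    by_contra hc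
    interval_cases h <;> simp_all
  haveI hchar : CharP F 2 := by
    have hp2 : ringChar F = 2 := by
      obtain ⟨n, hp, hcard⟩ := FiniteField.card F (ringChar F)
      have : ringChar F ∣ 2 ^ h := hF ▸ hcard ▸ dvd_pow_self _ n.2.ne'
      exact (Nat.prime_dvd_prime_iff_eq hp Nat.prime_two).mp (hp.dvd_of_dvd_pow this)
    exact ringChar.of_eq hp2
  have h2 : (2 : F) = 0 := CharTwo.two_eq_zero
  set M : Matrix (Fin 3) (Fin 3) F :=
    !![1, t1, t1 ^ 2 ^ i; 1, t2, t2 ^ 2 ^ i; 1, t3, t3 ^ 2 ^ i] with hM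
  have key : M.det ≠ 0 := by
    intro hdet
    rw [Matrix.det_fin_three] at hdet
    simp only [hM, Matrix.cons_val', Matrix.cons_val_zero, Matrix.cons_val_one, Matrix.head_cons,
      Matrix.empty_val', Matrix.cons_val_fin_one, Matrix.head_fin_const, Matrix.of_apply,
      Matrix.cons_val_two, Matrix.tail_cons, one_mul, mul_one] at hdet
    have hE : (t1 + t2) * (t1 + t3) ^ 2 ^ i = (t1 + t3) * (t1 + t2) ^ 2 ^ i := by
      have e13 : (t1 + t3) ^ 2 ^ i = t1 ^ 2 ^ i + t3 ^ 2 ^ i := add_pow_char_pow t1 t3 2 i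
      have e12 : (t1 + t2) ^ 2 ^ i = t1 ^ 2 ^ i + t2 ^ 2 ^ i := add_pow_char_pow t1 t2 2 i
      rw [e13, e12]
      linear_combination -hdet + (t2 * t3 ^ 2 ^ i - t3 * t2 ^ 2 ^ i) * h2
    have ha : t1 + t2 ≠ 0 := by
      intro hc; exact h12 (sub_eq_zero.mp (by rw [CharTwo.sub_eq_add]; exact hc))
    have hb : t1 + t3 ≠ 0 := by
      intro hc; exact h13 (sub_eq_zero.mp (by rw [CharTwo.sub_eq_add]; exact hc))
    set c : F := (t1 + t2) / (t1 + t3) with hc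
    have hc0 : c ≠ 0 := div_ne_zero ha hb
    have hc1 : c ≠ 1 := by
      intro hc1
      rw [hc, div_eq_one_iff_eq hb] at hc1
      exact h23 (add_left_cancel hc1)
    have hck : c ^ 2 ^ i = c := by
      rw [hc, div_pow, div_eq_div_iff (pow_ne_zero _ hb) hb]
      linear_combination -hE
    have hpow_h : ∀ x : F, x ^ 2 ^ h = x := by
      intro x
      have := FiniteField.pow_card x
      rwa [hF] at this
    have hmul : ∀ m : ℕ, c ^ 2 ^ (i * m) = c := by
      intro m
      induction m with
      | zero => simp
      | succ m ih => rw [Nat.mul_succ, pow_add, pow_mul, ih, hck]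
    have hmulh : ∀ m : ℕ, c ^ 2 ^ (h * m) = c := by
      intro m
      induction m with
      | zero => simp
      | succ m ih => rw [Nat.mul_succ, pow_add, pow_mul, ih, hpow_h]
    obtain ⟨m, -, hm⟩ := Nat.exists_mul_mod_eq_one_of_coprime hgcd (lt_of_lt_of_le one_lt_two hh2)
    have hdm : h * (i * m / h) + 1 = i * m := by
      conv_rhs => rw [← Nat.div_add_mod (i * m) h, hm]
    have hc2 : c * c = c := by
      have := hmul m
      rw [← hdm, pow_add, pow_mul, pow_one, hmulh, sq] at this
      exact this
    exact hc1 (mul_left_cancel₀ hc0 (by rw [hc2, mul_one]))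
  have hunit : IsUnit M := (Matrix.isUnit_iff_isUnit_det M).mpr (isUnit_iff_ne_zero.mpr key)
  have hli := Matrix.linearIndependent_rows_iff_isUnit.mpr hunit
  convert hli using 1
  rw [hM]; rfl
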